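/- For an integer m ≥ 3, let Ω denote the m × m real matrix with rows and columns indexed by 0, 1, …, m−1, whose entries are: Ω(0,1) = 2; Ω(i,j) = 1 whenever |i − j| = 1 and (i,j) ≠ (0,1); Ω(m−1,0) = 1; and all other entries equal 0. Then the set of complex eigenvalues of Ω (the roots of its characteristic polynomial over ℂ) equals { 2·cos(2πq/m) : q ∈ ℤ, 0 ≤ q ≤ ⌊m/2⌋ }. -/

import Mathlib

open scoped BigOperators

/-- The `m × m` comparison matrix `Ω`: `Ω 0 1 = 2`, `Ω i j = 1` when `|i − j| = 1`
and `(i,j) ≠ (0,1)`, `Ω (m−1) 0 = 1`, all other entries `0`. -/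
def OmegaMat (m : ℕ) : Matrix (Fin m) (Fin m) ℝ := fun i j =>
  if i.val = 0 ∧ j.val = 1 then 2
  else if i.val + 1 = j.val ∨ j.val + 1 = i.val then 1
  else if i.val = m - 1 ∧ j.val = 0 then 1
  else 0

open Polynomial Matrix Complex

namespace Stmt3Aux

noncomputable def zeta (m : ℕ) : ℂ := Complex.exp (2 * ↑Real.pi * Complex.I / m)

lemma zeta_pow_m {m : ℕ} (hm : m ≠ 0) : zeta m ^ m = 1 :=
  (Complex.isPrimitiveRoot_exp m hm).pow_eq_one

lemma zeta_pow_mod {m : ℕ} (hm : m ≠ 0) (x : ℕ) : zeta m ^ (x % m) = zeta m ^ x := by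
  conv_rhs => rw [← Nat.mod_add_div x m]
  rw [pow_add, pow_mul, zeta_pow_m hm, one_pow, mul_one]

lemma zeta_pow_congr {m : ℕ} (hm : m ≠ 0) {x y : ℕ} (h : x % m = y % m) :
    zeta m ^ x = zeta m ^ y := by
  rw [← zeta_pow_mod hm x, h, zeta_pow_mod hm y]

noncomputable def Fm (m : ℕ) : Matrix (Fin m) (Fin m) ℂ :=
  Matrix.vandermonde (fun i : Fin m => zeta m ^ (i : ℕ))

lemma Fm_apply {m : ℕ} (i j : Fin m) : Fm m i j = zeta m ^ ((i : ℕ) * (j : ℕ)) := by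
  simp [Fm, Matrix.vandermonde, pow_mul]

lemma Fm_det_ne_zero {m : ℕ} (hm : m ≠ 0) : (Fm m).det ≠ 0 := by
  rw [Fm, Matrix.det_vandermonde]
  rw [Finset.prod_ne_zero_iff]
  intro i _
  rw [Finset.prod_ne_zero_iff]
  intro j hj
  rw [Finset.mem_Ioi] at hj
  rw [sub_ne_zero]
  intro h
  rw [show zeta m = Complex.exp (2 * ↑Real.pi * Complex.I / m) from rfl] at h
  exact absurd ((Complex.isPrimitiveRoot_exp m hm).pow_inj j.2 i.2 h) (Fin.val_ne_of_ne hj.ne')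


variable {m : ℕ}

def cvec (m : ℕ) [NeZero m] : Fin m → ℂ := fun x => if x = 1 ∨ x = -1 then 1 else 0

noncomputable def Cc (m : ℕ) [NeZero m] : Matrix (Fin m) (Fin m) ℂ :=
  Matrix.circulant (cvec m)

noncomputable def mu (m : ℕ) : Fin m → ℂ := fun q =>
  zeta m ^ (q : ℕ) + zeta m ^ ((m - 1) * (q : ℕ))

lemma val_one (hm : 3 ≤ m) [NeZero m] : ((1 : Fin m) : ℕ) = 1 := by
  rw [Fin.val_one']; exact Nat.mod_eq_of_lt (by omega)

lemma neg_one_val (hm : 3 ≤ m) [NeZero m] : ((-1 : Fin m) : ℕ) = m - 1 := by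
  rcases m with _ | n
  · omega
  · exact Fin.coe_neg_one

lemma one_ne_negone [NeZero m] (hm : 3 ≤ m) : (1 : Fin m) ≠ -1 := by
  intro h
  have h1 := val_one hm (m := m)
  rw [h, neg_one_val hm] at h1
  omega

lemma Cc_apply [NeZero m] (hm : 3 ≤ m) (i j : Fin m) :
    Cc m i j = (if j = i - 1 then 1 else 0) + (if j = i + 1 then 1 else 0) := by
  have h1 : (i - j = 1) ↔ (j = i - 1) := by
    constructor
    · intro h; rw [← h]; abel
    · intro h; rw [h]; abel
  have h2 : (i - j = -1) ↔ (j = i + 1) := by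
    constructor
    · intro h
      have : j = i - (-1) := by rw [← h]; abel
      rw [this]; abel
    · intro h; rw [h]; abel
  have hne : i - 1 ≠ i + 1 := by
    intro h
    rw [sub_eq_add_neg] at h
    have h' : (-1 : Fin m) = 1 := add_left_cancel h
    exact one_ne_negone hm h'.symm
  rw [Cc, Matrix.circulant_apply, cvec]
  simp only [h1, h2]
  by_cases ha : j = i - 1 <;> by_cases hb : j = i + 1 <;> simp_all

lemma val_add_congr [NeZero m] (a b : Fin m) :
    ((a + b : Fin m) : ℕ) % m = ((a : ℕ) + (b : ℕ)) % m := by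
  rw [Fin.val_add, Nat.mod_mod_of_dvd _ dvd_rfl]

lemma mul_fourier [NeZero m] (hm : 3 ≤ m) :
    Cc m * Fm m = Fm m * Matrix.diagonal (mu m) := by
  have hm0 : m ≠ 0 := by omega
  ext i q
  rw [Matrix.mul_apply, Matrix.mul_diagonal]
  have : ∀ j, Cc m i j * Fm m j q =
      (if j = i - 1 then Fm m j q else 0) + (if j = i + 1 then Fm m j q else 0) := by
    intro j
    rw [Cc_apply hm, add_mul, ite_mul, ite_mul, one_mul, zero_mul]
  simp_rw [this]
  rw [Finset.sum_add_distrib, Finset.sum_ite_eq' Finset.univ (i - 1),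
    Finset.sum_ite_eq' Finset.univ (i + 1)]
  simp only [Finset.mem_univ, if_true]
  rw [Fm_apply, Fm_apply, Fm_apply, mu]
  have key : ∀ a b : Fin m, zeta m ^ (((a + b : Fin m) : ℕ) * (q : ℕ)) =
      zeta m ^ (((a : ℕ) + (b : ℕ)) * (q : ℕ)) := by
    intro a b
    exact zeta_pow_congr hm0 (Nat.ModEq.mul_right _ (val_add_congr a b))
  have e1 : zeta m ^ (((i + 1 : Fin m) : ℕ) * (q : ℕ)) =
      zeta m ^ ((i : ℕ) * (q : ℕ)) * zeta m ^ (q : ℕ) := by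
    rw [key i 1, val_one hm, add_mul, one_mul, pow_add]
  have e2 : zeta m ^ (((i - 1 : Fin m) : ℕ) * (q : ℕ)) =
      zeta m ^ ((i : ℕ) * (q : ℕ)) * zeta m ^ ((m - 1) * (q : ℕ)) := by
    have hsub : i - 1 = i + (-1) := by abel
    rw [hsub, key i (-1), neg_one_val hm, add_mul, pow_add]
  rw [e1, e2]
  ring


lemma charpoly_diagonal_c {n : Type*} [DecidableEq n] [Fintype n] (d : n → ℂ) :
    (Matrix.diagonal d).charpoly = ∏ i, (X - C (d i)) := by
  have h : charmatrix (Matrix.diagonal d) =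
      Matrix.diagonal (fun i => (X : ℂ[X]) - C (d i)) := by
    ext i j
    by_cases hij : i = j
    · subst hij; simp
    · simp [Matrix.charmatrix_apply, Matrix.diagonal_apply_ne _ hij, Matrix.diagonal_apply_ne]
  rw [Matrix.charpoly, h, Matrix.det_diagonal]

lemma charpoly_Cc [NeZero m] (hm : 3 ≤ m) :
    (Cc m).charpoly = ∏ q, (X - C (mu m q)) := by
  have hm0 : m ≠ 0 := by omega
  have hF : Cc m * Fm m = Fm m * Matrix.diagonal (mu m) := mul_fourier hm
  set F' : Matrix (Fin m) (Fin m) ℂ[X] := (C : ℂ →+* ℂ[X]).mapMatrix (Fm m) with hF'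
  have hmain : charmatrix (Cc m) * F' = F' * charmatrix (Matrix.diagonal (mu m)) := by
    rw [charmatrix, charmatrix, sub_mul, mul_sub]
    congr 1
    · exact (Matrix.scalar_commute (X : ℂ[X]) (fun r => Commute.all _ _) F').symm.eq.symm
    · rw [← _root_.map_mul, hF, _root_.map_mul]
  have hdet := congrArg Matrix.det hmain
  rw [Matrix.det_mul, Matrix.det_mul] at hdet
  have hdF : F'.det = C ((Fm m).det) := (RingHom.map_det C (Fm m)).symm ▸ rfl
  have hC : F'.det ≠ 0 := by
    rw [hdF]
    simpa using Fm_det_ne_zero hm0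
  have : (charmatrix (Cc m)).det = (charmatrix (Matrix.diagonal (mu m))).det := by
    rw [mul_comm] at hdet
    exact mul_left_cancel₀ hC (hdet.trans rfl)
  rw [Matrix.charpoly, this, ← Matrix.charpoly, charpoly_diagonal_c]


lemma val_add_one (hm : 3 ≤ m) [NeZero m] (a : Fin m) :
    ((a + 1 : Fin m) : ℕ) = if (a : ℕ) + 1 = m then 0 else (a : ℕ) + 1 := by
  rw [Fin.val_add, val_one hm]
  split_ifs with h
  · rw [h, Nat.mod_self]
  · exact Nat.mod_eq_of_lt (by have := a.isLt; omega)

lemma eq_add_one_iff (hm : 3 ≤ m) [NeZero m] (a b : Fin m) :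
    a = b + 1 ↔ ((a : ℕ) = (b : ℕ) + 1 ∨ ((b : ℕ) + 1 = m ∧ (a : ℕ) = 0)) := by
  rw [Fin.ext_iff, val_add_one hm]
  have ha := a.isLt
  have hb := b.isLt
  split_ifs with h
  · omega
  · omega

lemma sub_one_iff [NeZero m] (a b : Fin m) : b = a - 1 ↔ a = b + 1 := by
  constructor
  · intro h; rw [h]; abel
  · intro h; rw [h]; abel

lemma omega_eq (hm : 3 ≤ m) [NeZero m] :
    (OmegaMat m).map (fun r : ℝ => (r : ℂ)) =
      Matrix.updateRow (Cc m) 0 (fun k => if k = (1 : Fin m) then 2 else 0) := by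
  ext i j
  have hiv := i.isLt
  have hjv := j.isLt
  have hi0 : (i = 0) ↔ ((i : ℕ) = 0) := by rw [Fin.ext_iff]; simp
  have hj1 : (j = (1 : Fin m)) ↔ ((j : ℕ) = 1) := by rw [Fin.ext_iff, val_one hm]
  have hjm : (j = i - 1) ↔ ((i : ℕ) = (j : ℕ) + 1 ∨ ((j : ℕ) + 1 = m ∧ (i : ℕ) = 0)) := by
    rw [sub_one_iff, eq_add_one_iff hm]
  have hjp : (j = i + 1) ↔ ((j : ℕ) = (i : ℕ) + 1 ∨ ((i : ℕ) + 1 = m ∧ (j : ℕ) = 0)) :=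
    eq_add_one_iff hm j i
  rw [Matrix.map_apply, Matrix.updateRow_apply, Cc_apply hm]
  simp only [OmegaMat, hi0, hj1, hjm, hjp]
  split_ifs <;> (try norm_num) <;> omega

lemma cvec_neg [NeZero m] (x : Fin m) : cvec m (-x) = cvec m x := by
  unfold cvec
  have : (-x = 1 ∨ -x = -1) ↔ (x = 1 ∨ x = -1) := by
    constructor
    · rintro (h | h)
      · right; rw [← h]; abel
      · left; exact neg_injective h
    · rintro (h | h)
      · right; rw [h]
      · left; rw [h]; abel
  simp only [this]

lemma charm_inv [NeZero m] (i j : Fin m) :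
    charmatrix (Cc m) (-i) (-j) = charmatrix (Cc m) i j := by
  have hC : Cc m (-i) (-j) = Cc m i j := by
    rw [Cc, Matrix.circulant_apply, Matrix.circulant_apply]
    have : -i - -j = -(i - j) := by abel
    rw [this, cvec_neg]
  by_cases hij : i = j
  · subst hij; simp [hC]
  · have hij' : -i ≠ -j := fun h => hij (neg_injective h)
    rw [Matrix.charmatrix_apply_ne _ _ _ hij', Matrix.charmatrix_apply_ne _ _ _ hij, hC]

lemma det_single_symm [NeZero m] (hm : 3 ≤ m) :
    (Matrix.updateRow (charmatrix (Cc m)) 0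
        (fun k => if k = (1 : Fin m) then (1 : ℂ[X]) else 0)).det =
    (Matrix.updateRow (charmatrix (Cc m)) 0
        (fun k => if k = (-1 : Fin m) then (1 : ℂ[X]) else 0)).det := by
  rw [← Matrix.det_submatrix_equiv_self (Equiv.neg (Fin m))
    (Matrix.updateRow (charmatrix (Cc m)) 0 (fun k => if k = (-1 : Fin m) then (1 : ℂ[X]) else 0))]
  congr 1
  refine Matrix.ext fun i j => ?_
  rw [Matrix.submatrix_apply]
  simp only [Equiv.neg_apply]
  rw [Matrix.updateRow_apply, Matrix.updateRow_apply]
  have h1 : (-j = -1) ↔ (j = 1) := neg_inj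
  by_cases hi : i = 0
  · subst hi
    rw [neg_zero, if_pos rfl, if_pos rfl]
    simp only [h1]
  · rw [if_neg (fun h => hi (neg_eq_zero.mp h)), if_neg hi, charm_inv]


lemma charpoly_omega (hm : 3 ≤ m) [NeZero m] :
    ((OmegaMat m).map (fun r : ℝ => (r : ℂ))).charpoly = (Cc m).charpoly := by
  classical
  set M : Matrix (Fin m) (Fin m) ℂ[X] := charmatrix (Cc m) with hM
  set u1 : Fin m → ℂ[X] := fun k => if k = (1 : Fin m) then 1 else 0 with hu1
  set u2 : Fin m → ℂ[X] := fun k => if k = (-1 : Fin m) then 1 else 0 with hu2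
  have h1n : (1 : Fin m) ≠ -1 := one_ne_negone hm
  have hchar : charmatrix ((OmegaMat m).map (fun r : ℝ => (r : ℂ))) =
      Matrix.updateRow M 0 (M 0 + (u2 - u1)) := by
    refine Matrix.ext fun i k => ?_
    rw [Matrix.updateRow_apply]
    by_cases hi : i = 0
    · subst hi
      rw [if_pos rfl]
      have hrow : ((OmegaMat m).map (fun r : ℝ => (r : ℂ))) 0 k =
          (if k = (1 : Fin m) then 2 else 0) := by
        rw [omega_eq hm, Matrix.updateRow_self]
      have hCck : Cc m 0 k = (if k = (-1 : Fin m) then 1 else 0) +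
          (if k = (1 : Fin m) then 1 else 0) := by
        rw [Cc_apply hm, zero_sub, zero_add]
      rw [Matrix.charmatrix_apply, hrow]
      simp only [Pi.add_apply, Pi.sub_apply, hu1, hu2, hM, Matrix.charmatrix_apply, hCck]
      by_cases hk1 : k = (1 : Fin m) <;> by_cases hk2 : k = (-1 : Fin m)
      · exact absurd (hk1 ▸ hk2) h1n
      · simp only [hk1, hk2, if_true, if_false, if_neg (Ne.symm h1n), map_ofNat,
          Polynomial.C_0, Polynomial.C_1, map_add, zero_add, add_zero, if_neg h1n]
        try ring
      · simp only [hk1, hk2, if_true, if_false, if_neg (Ne.symm h1n), map_ofNat,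
          Polynomial.C_0, Polynomial.C_1, map_add, zero_add, add_zero, if_neg h1n]
        try ring
      · simp only [hk1, hk2, if_false, map_ofNat, Polynomial.C_0, Polynomial.C_1, map_add, zero_add, add_zero, if_neg hk1, if_neg hk2]
        try ring
    · rw [if_neg hi, hM]
      rw [Matrix.charmatrix_apply, Matrix.charmatrix_apply]
      congr 2
      rw [omega_eq hm, Matrix.updateRow_ne hi]
  have hsmul : u2 - u1 = u2 + (-1 : ℂ[X]) • u1 := by
    funext k
    simp [Pi.sub_apply, Pi.add_apply, Pi.smul_apply, smul_eq_mul]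
    ring
  rw [Matrix.charpoly, hchar, Matrix.det_updateRow_add, Matrix.updateRow_eq_self, hsmul,
    Matrix.det_updateRow_add, Matrix.det_updateRow_smul, det_single_symm hm]
  rw [← hM]
  ring_nf
  rw [Matrix.charpoly]
  rw [hu2, ← hM]
  ring

lemma mu_eq (hm : 3 ≤ m) [NeZero m] (q : Fin m) :
    mu m q = ((2 * Real.cos (2 * Real.pi * (q : ℕ) / m) : ℝ) : ℂ) := by
  have hm0 : (m : ℂ) ≠ 0 := by
    simp only [ne_eq, Nat.cast_eq_zero]
    omega
  set θ : ℝ := 2 * Real.pi * (q : ℕ) / m with hθ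
  have h1 : zeta m ^ (q : ℕ) = Complex.exp (θ * Complex.I) := by
    rw [zeta, ← Complex.exp_nat_mul]
    congr 1
    rw [hθ]
    push_cast
    field_simp
  have h2 : zeta m ^ ((m - 1) * (q : ℕ)) = Complex.exp (-θ * Complex.I) := by
    have hmul : zeta m ^ ((m - 1) * (q : ℕ)) * zeta m ^ (q : ℕ) = 1 := by
      rw [← pow_add]
      have : (m - 1) * (q : ℕ) + (q : ℕ) = m * (q : ℕ) := by
        obtain ⟨n, rfl⟩ : ∃ n, m = n + 1 := ⟨m - 1, by omega⟩
        simp [Nat.add_sub_cancel]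
        ring
      rw [this, pow_mul, zeta_pow_m (by omega), one_pow]
    rw [h1] at hmul
    have : zeta m ^ ((m - 1) * (q : ℕ)) = (Complex.exp (θ * Complex.I))⁻¹ :=
      eq_inv_of_mul_eq_one_left hmul
    rw [this, ← Complex.exp_neg]
    ring_nf
  rw [mu, h1, h2]
  rw [← Complex.two_cos, ← Complex.ofReal_cos]
  push_cast
  ring

end Stmt3Aux

/-- For `m ≥ 3`, the set of complex eigenvalues of `Ω` (roots of its
characteristic polynomial over `ℂ`) is `{ 2·cos(2πq/m) : 0 ≤ q ≤ ⌊m/2⌋ }`. -/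
theorem stmt3 (m : ℕ) (hm : 3 ≤ m) :
    {z : ℂ | ((OmegaMat m).map (fun r : ℝ => (r : ℂ))).charpoly.IsRoot z} =
      {z : ℂ | ∃ q : ℤ, 0 ≤ q ∧ q ≤ (m : ℤ) / 2 ∧
        z = ((2 * Real.cos (2 * Real.pi * q / m) : ℝ) : ℂ)} := by
  haveI : NeZero m := ⟨by omega⟩
  have hmr : (m : ℝ) ≠ 0 := by
    simp only [ne_eq, Nat.cast_eq_zero]; omega
  have hdiv : ((m : ℤ)) / 2 = ((m / 2 : ℕ) : ℤ) := by omega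
  ext z
  simp only [Set.mem_setOf_eq]
  rw [Stmt3Aux.charpoly_omega hm, Stmt3Aux.charpoly_Cc hm]
  constructor
  · intro h
    rw [Polynomial.IsRoot, Polynomial.eval_prod, Finset.prod_eq_zero_iff] at h
    obtain ⟨q, -, hq⟩ := h
    rw [Polynomial.eval_sub, Polynomial.eval_X, Polynomial.eval_C, sub_eq_zero] at hq
    rw [Stmt3Aux.mu_eq hm q] at hq
    rcases le_or_gt ((q : ℕ)) (m / 2) with hle | hlt
    · refine ⟨((q : ℕ) : ℤ), by positivity, ?_, ?_⟩
      · rw [hdiv]; exact_mod_cast hle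
      · rw [hq]
        congr 3
        try push_cast
        try ring
    · refine ⟨(((m - (q : ℕ) : ℕ)) : ℤ), by positivity, ?_, ?_⟩
      · rw [hdiv]
        have := q.isLt
        have h2 : m - (q : ℕ) ≤ m / 2 := by omega
        exact_mod_cast h2
      · rw [hq]
        have harg : 2 * Real.pi * (((m - (q : ℕ) : ℕ) : ℤ) : ℝ) / m =
            2 * Real.pi - 2 * Real.pi * ((q : ℕ) : ℝ) / m := by
          have := q.isLt
          rw [Int.cast_natCast, Nat.cast_sub (le_of_lt q.isLt)]
          field_simp
        rw [harg, Real.cos_two_pi_sub]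
  · rintro ⟨q, hq0, hq2, rfl⟩
    set k : ℕ := q.toNat with hk
    have hkq : (k : ℤ) = q := Int.toNat_of_nonneg hq0
    have hklt : k < m := by omega
    rw [Polynomial.IsRoot, Polynomial.eval_prod]
    refine Finset.prod_eq_zero (Finset.mem_univ (⟨k, hklt⟩ : Fin m)) ?_
    rw [Polynomial.eval_sub, Polynomial.eval_X, Polynomial.eval_C, sub_eq_zero]
    rw [Stmt3Aux.mu_eq hm]
    congr 3
    rw [← hkq]
    try push_cast
    try ring
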